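/- Define Ψ : ℝ⁴ → ℂ² by Ψ(t, y, z, q) = (z₁, z₂) with z₂ = (y + iz)/2 and z₁ = ½e^{2t} + (y² + z²)/4 + iq. Then Ψ is a smooth diffeomorphism from all of ℝ⁴ onto U' = {(z₁, z₂) ∈ ℂ² : z₁ + z̄₁ − 2z₂z̄₂ > 0}; in particular, in the coordinates (t, y, z, q) the structures of Theorem 1 extend to globally regular structures on ℝ⁴. -/

import Mathlib

noncomputable section

/-- `w(z₁,z₂) = v − 2z₂z̄₂` where `v = z₁ + z̄₁ = 2 Re z₁`. -/
def wDef (p : ℂ × ℂ) : ℝ := 2 * p.1.re - 2 * Complex.normSq p.2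

/-- The region `U' = {(z₁,z₂) ∈ ℂ² : v − 2z₂z̄₂ > 0}`. -/
def Uprime : Set (ℂ × ℂ) := {p | 0 < wDef p}

/-- `K = log(v − 2z₂z̄₂)`. -/
def KDef (p : ℂ × ℂ) : ℝ := Real.log (wDef p)

/-- `K` as a function of `v` at fixed `z₂`. -/
def KofV (z₂ : ℂ) (v : ℝ) : ℝ := Real.log (v - 2 * Complex.normSq z₂)

/-- `K_v = ∂K/∂v`. -/
def Kv (p : ℂ × ℂ) : ℝ := deriv (KofV p.2) (2 * p.1.re)

/-- `K_vv = ∂²K/∂v²`. -/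
def Kvv (p : ℂ × ℂ) : ℝ := deriv (deriv (KofV p.2)) (2 * p.1.re)

/-- The Wirtinger derivative `∂G/∂z = ½(∂_x G − i ∂_y G)` of `G : ℂ → ℂ` at `c`. -/
def wirtD (G : ℂ → ℂ) (c : ℂ) : ℂ :=
  (deriv (fun x : ℝ => G ((x : ℂ) + (c.im : ℂ) * Complex.I)) c.re -
    Complex.I * deriv (fun y : ℝ => G ((c.re : ℂ) + (y : ℂ) * Complex.I)) c.im) / 2

/-- The Wirtinger derivative `∂G/∂z̄ = ½(∂_x G + i ∂_y G)` of `G : ℂ → ℂ` at `c`. -/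
def wirtDbar (G : ℂ → ℂ) (c : ℂ) : ℂ :=
  (deriv (fun x : ℝ => G ((x : ℂ) + (c.im : ℂ) * Complex.I)) c.re +
    Complex.I * deriv (fun y : ℝ => G ((c.re : ℂ) + (y : ℂ) * Complex.I)) c.im) / 2

/-- `K_{v2} = ∂²K/∂v∂z₂` (Wirtinger derivative in `z₂` of `K_v`). -/
def Kv2 (p : ℂ × ℂ) : ℂ :=
  wirtD (fun z₂ => ((deriv (KofV z₂) (2 * p.1.re) : ℝ) : ℂ)) p.2

/-- `K_{v2̄} = ∂²K/∂v∂z̄₂`. -/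
def Kv2bar (p : ℂ × ℂ) : ℂ :=
  wirtDbar (fun z₂ => ((deriv (KofV z₂) (2 * p.1.re) : ℝ) : ℂ)) p.2

/-- `K_{22̄} = ∂²K/∂z₂∂z̄₂` (at fixed `v`). -/
def K22bar (p : ℂ × ℂ) : ℂ :=
  wirtDbar (fun z₂ =>
    wirtD (fun u => ((Real.log (2 * p.1.re - 2 * Complex.normSq u) : ℝ) : ℂ)) z₂) p.2

/-- The 1-form `dz₁ − 2z̄₂dz₂` evaluated on a real tangent vector `X ∈ ℂ² ≅ ℝ⁴`. -/
def AForm (p : ℂ × ℂ) (X : ℂ × ℂ) : ℂ := X.1 - 2 * starRingEnd ℂ p.2 * X.2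

/-- The explicit Ricci-flat metric
`g = (v − 2z₂z̄₂)^{−1/2}(dz₁ − 2z̄₂dz₂)(dz̄₁ − 2z₂dz̄₂) + 4(v − 2z₂z̄₂)^{1/2} dz₂ dz̄₂`
(with `2αβ = α⊗β + β⊗α`) on real tangent vectors. -/
def gExpl (p : ℂ × ℂ) (X Y : ℂ × ℂ) : ℝ :=
  1 / Real.sqrt (wDef p) * (AForm p X * starRingEnd ℂ (AForm p Y)).re +
    4 * Real.sqrt (wDef p) * (X.2 * starRingEnd ℂ Y.2).re

/-- The almost complex structure
`J⁺_{e^{iφ}} = 2Re{ i e^{iφ} [ (2(v − 2z₂z̄₂)^{1/2})^{−1}(dz₁ − 2z̄₂dz₂) ⊗ (∂_{z̄₂} + 2z₂∂_{z̄₁}) − 2(v − 2z₂z̄₂)^{1/2} dz₂ ⊗ ∂_{z̄₁} ] }`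
as a real endomorphism of the tangent space `ℂ² ≅ ℝ⁴`: a real tangent vector `X`
corresponds to `X.1 ∂_{z₁} + conj X.1 ∂_{z̄₁} + X.2 ∂_{z₂} + conj X.2 ∂_{z̄₂}` in the
complexified tangent space; the components below are the `∂_{z₁}`- and
`∂_{z₂}`-coefficients of `(T + T̄)(X)`. -/
def JExpl (φ : ℝ) (p : ℂ × ℂ) (X : ℂ × ℂ) : ℂ × ℂ :=
  (starRingEnd ℂ (Complex.I * Complex.exp ((φ : ℂ) * Complex.I) *
      (AForm p X / (2 * (Real.sqrt (wDef p) : ℂ)) * (2 * p.2) -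
        2 * (Real.sqrt (wDef p) : ℂ) * X.2)),
   starRingEnd ℂ (Complex.I * Complex.exp ((φ : ℂ) * Complex.I) *
      (AForm p X / (2 * (Real.sqrt (wDef p) : ℂ)))))

/-- The globalizing coordinate transformation
`Ψ(t,y,z,q) = (½e^{2t} + (y²+z²)/4 + iq, (y+iz)/2)`, so that
`t = ½ log(v − 2z₂z̄₂)`, `y = z₂ + z̄₂`, `z = i(z̄₂ − z₂)`, `q = (z₁−z̄₁)/(2i)`. -/
def PsiGlob (p : ℝ × ℝ × ℝ × ℝ) : ℂ × ℂ :=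
  (((Real.exp (2 * p.1) / 2 + (p.2.1 ^ 2 + p.2.2.1 ^ 2) / 4 : ℝ) : ℂ) +
      ((p.2.2.2 : ℝ) : ℂ) * Complex.I,
   (((p.2.1 : ℝ) : ℂ) + ((p.2.2.1 : ℝ) : ℂ) * Complex.I) / 2)


def PhiGlob (q : ℂ × ℂ) : ℝ × ℝ × ℝ × ℝ :=
  (Real.log (wDef q) / 2, 2 * q.2.re, 2 * q.2.im, q.1.im)

lemma wDef_Psi (p : ℝ × ℝ × ℝ × ℝ) : wDef (PsiGlob p) = Real.exp (2 * p.1) := by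
  simp [wDef, PsiGlob, Complex.normSq_apply, Complex.add_re, Complex.ofReal_re,
    Complex.mul_re, Complex.div_re, -Complex.ofReal_exp, -Complex.ofReal_pow,
    Complex.normSq_mk, Complex.add_im, Complex.ofReal_im]
  ring

lemma psi_left_inv (p : ℝ × ℝ × ℝ × ℝ) : PhiGlob (PsiGlob p) = p := by
  have hw := wDef_Psi p
  obtain ⟨t, y, z, q⟩ := p
  refine Prod.ext ?_ (Prod.ext ?_ (Prod.ext ?_ ?_))
  · show Real.log (wDef (PsiGlob (t, y, z, q))) / 2 = t
    rw [hw, Real.log_exp]; ring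
  all_goals
    simp [PhiGlob, PsiGlob, -Complex.ofReal_exp, -Complex.ofReal_pow,
      Complex.div_re, Complex.div_im, Complex.add_re, Complex.add_im, Complex.mul_re,
      Complex.mul_im, Complex.ofReal_re, Complex.ofReal_im]
  all_goals ring

lemma psi_right_inv (q : ℂ × ℂ) (hq : q ∈ Uprime) : PsiGlob (PhiGlob q) = q := by
  have hw : (0:ℝ) < wDef q := hq
  obtain ⟨z₁, z₂⟩ := q
  simp only [PsiGlob, PhiGlob]
  rw [show 2 * (Real.log (wDef (z₁, z₂)) / 2) = Real.log (wDef (z₁, z₂)) by ring,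
    Real.exp_log hw]
  refine Prod.ext (Complex.ext ?_ ?_) (Complex.ext ?_ ?_) <;>
    simp [wDef, Complex.normSq_apply, -Complex.ofReal_pow, -Complex.ofReal_mul,
      Complex.div_re, Complex.div_im, Complex.add_re,
      Complex.add_im, Complex.mul_re, Complex.mul_im, Complex.ofReal_re,
      Complex.ofReal_im] <;> ring

lemma psi_smooth : ContDiff ℝ (⊤ : ℕ∞) PsiGlob := by
  have h0 : ContDiff ℝ (⊤:ℕ∞) (fun x : ℝ => (x:ℂ)) := Complex.ofRealCLM.contDiff
  have h1 : ContDiff ℝ (⊤:ℕ∞) (fun p : ℝ×ℝ×ℝ×ℝ => Real.exp (2*p.1)/2 + (p.2.1^2+p.2.2.1^2)/4) :=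
    ((Real.contDiff_exp.comp (contDiff_const.mul contDiff_fst)).div_const 2).add
      ((((contDiff_snd.fst).pow 2).add ((contDiff_snd.snd.fst).pow 2)).div_const 4)
  refine ContDiff.prodMk ?_ ?_
  · exact (h0.comp h1).add ((h0.comp contDiff_snd.snd.snd).mul contDiff_const)
  · exact ((h0.comp contDiff_snd.fst).add
      ((h0.comp contDiff_snd.snd.fst).mul contDiff_const)).div_const 2

lemma phi_smooth : ContDiffOn ℝ (⊤ : ℕ∞) PhiGlob Uprime := by
  have hw : ContDiff ℝ (⊤:ℕ∞) wDef := by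
    have : wDef = fun p : ℂ × ℂ => 2 * p.1.re - 2 * (p.2.re^2 + p.2.im^2) := by
      funext p; simp [wDef, Complex.normSq_apply]; ring
    rw [this]
    exact (contDiff_const.mul (Complex.reCLM.contDiff.comp contDiff_fst)).sub
      (contDiff_const.mul (((Complex.reCLM.contDiff.comp contDiff_snd).pow 2).add
        ((Complex.imCLM.contDiff.comp contDiff_snd).pow 2)))
  refine ContDiffOn.prodMk ?_ (ContDiffOn.prodMk ?_ (ContDiffOn.prodMk ?_ ?_))
  · exact ((hw.contDiffOn.log (fun q hq => ne_of_gt hq)).div_const 2)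
  · exact (contDiff_const.mul (Complex.reCLM.contDiff.comp contDiff_snd)).contDiffOn
  · exact (contDiff_const.mul (Complex.imCLM.contDiff.comp contDiff_snd)).contDiffOn
  · exact (Complex.imCLM.contDiff.comp contDiff_fst).contDiffOn

/-- `Ψ` is a smooth diffeomorphism from all of `ℝ⁴` onto `U'`; in the
coordinates `(t,y,z,q)` the structures of Theorem 1 become globally regular on `ℝ⁴`. -/
theorem PsiGlob_global_diffeo :
    ContDiff ℝ (⊤ : ℕ∞) PsiGlob ∧
    Function.Injective PsiGlob ∧
    Set.range PsiGlob = Uprime ∧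
    (∃ Φ : ℂ × ℂ → ℝ × ℝ × ℝ × ℝ, ContDiffOn ℝ (⊤ : ℕ∞) Φ Uprime ∧
      (∀ p : ℝ × ℝ × ℝ × ℝ, Φ (PsiGlob p) = p) ∧ (∀ q ∈ Uprime, PsiGlob (Φ q) = q)) := by
  refine ⟨psi_smooth, Function.LeftInverse.injective psi_left_inv, ?_,
    PhiGlob, phi_smooth, psi_left_inv, psi_right_inv⟩
  ext q
  constructor
  · rintro ⟨p, rfl⟩
    show (0:ℝ) < wDef (PsiGlob p)
    rw [wDef_Psi]; exact Real.exp_pos _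
  · intro hq
    exact ⟨PhiGlob q, psi_right_inv q hq⟩
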